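/- Let X be a nonempty set and P = {X_j : j ∈ J} a partition of X with |J| ≥ 2. Then the semigroup generated under composition by the blocks of P ⊗ P^1 (namely R_P together with all X_{j1} × X_{j2} for j1 ≠ j2) equals {∅} ∪ {R_P} ∪ {X_{j1} × X_{j2} : j1, j2 ∈ J}, and R_P is an identity element of this semigroup. -/
import Mathlib


/-- Composition of binary relations viewed as subsets of `X × X`. -/
def rcomp {X : Type*} (A B : Set (X × X)) : Set (X × X) :=
  {p | ∃ z, (p.1, z) ∈ A ∧ (z, p.2) ∈ B}

instance relMul (X : Type*) : Mul (Set (X × X)) := ⟨rcomp⟩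

theorem stmt_15 {X J : Type*} [Nonempty X] (Xs : J → Set X)
    (hne : ∀ j, (Xs j).Nonempty)
    (hdisj : ∀ j1 j2 : J, j1 ≠ j2 → Disjoint (Xs j1) (Xs j2))
    (hcover : (⋃ j, Xs j) = Set.univ)
    (hJ : ∃ j1 j2 : J, j1 ≠ j2)
    (RP : Set (X × X)) (hRP : RP = ⋃ j, Xs j ×ˢ Xs j)
    (G : Set (Set (X × X)))
    (hG : G = insert RP {A : Set (X × X) | ∃ j1 j2 : J, j1 ≠ j2 ∧ A = Xs j1 ×ˢ Xs j2}) :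
    (Subsemigroup.closure G : Set (Set (X × X)))
      = insert ∅ (insert RP {A : Set (X × X) | ∃ j1 j2 : J, A = Xs j1 ×ˢ Xs j2}) ∧
    ∀ s ∈ Subsemigroup.closure G, rcomp RP s = s ∧ rcomp s RP = s := by
  classical
  have hblock : ∀ {j a : J} {x : X}, x ∈ Xs j → x ∈ Xs a → j = a := by
    intro j a x hj ha
    by_contra h
    exact (hdisj j a h).ne_of_mem hj ha rfl
  have hmem : ∀ x : X, ∃ j, x ∈ Xs j := by
    intro x
    have : x ∈ ⋃ j, Xs j := hcover ▸ Set.mem_univ x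
    exact Set.mem_iUnion.1 this
  have hmul : ∀ A B : Set (X × X), A * B = rcomp A B := fun _ _ => rfl
  have L1 : ∀ a b : J, rcomp RP (Xs a ×ˢ Xs b) = Xs a ×ˢ Xs b := by
    intro a b
    ext ⟨x, y⟩
    constructor
    · rintro ⟨z, hz1, hz2⟩
      rw [hRP] at hz1
      obtain ⟨j, hxj, hzj⟩ := Set.mem_iUnion.1 hz1
      obtain rfl := hblock hzj hz2.1
      exact ⟨hxj, hz2.2⟩
    · rintro ⟨hx, hy⟩
      exact ⟨x, hRP ▸ Set.mem_iUnion.2 ⟨a, hx, hx⟩, hx, hy⟩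
  have L2 : ∀ a b : J, rcomp (Xs a ×ˢ Xs b) RP = Xs a ×ˢ Xs b := by
    intro a b
    ext ⟨x, y⟩
    constructor
    · rintro ⟨z, hz1, hz2⟩
      rw [hRP] at hz2
      obtain ⟨j, hzj, hyj⟩ := Set.mem_iUnion.1 hz2
      obtain rfl := hblock hzj hz1.2
      exact ⟨hz1.1, hyj⟩
    · rintro ⟨hx, hy⟩
      exact ⟨y, ⟨hx, hy⟩, hRP ▸ Set.mem_iUnion.2 ⟨b, hy, hy⟩⟩
  have L3 : rcomp RP RP = RP := by
    ext ⟨x, y⟩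
    constructor
    · rintro ⟨z, hz1, hz2⟩
      rw [hRP] at hz1 hz2 ⊢
      obtain ⟨j, hxj, hzj⟩ := Set.mem_iUnion.1 hz1
      obtain ⟨k, hzk, hyk⟩ := Set.mem_iUnion.1 hz2
      obtain rfl := hblock hzj hzk
      exact Set.mem_iUnion.2 ⟨j, hxj, hyk⟩
    · intro hxy
      rw [hRP] at hxy
      obtain ⟨j, hxj, hyj⟩ := Set.mem_iUnion.1 hxy
      exact ⟨x, hRP ▸ Set.mem_iUnion.2 ⟨j, hxj, hxj⟩,
        hRP ▸ Set.mem_iUnion.2 ⟨j, hxj, hyj⟩⟩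
  have L4a : ∀ s : Set (X × X), rcomp (∅ : Set (X × X)) s = ∅ := by
    intro s; ext p; simp [rcomp]
  have L4b : ∀ s : Set (X × X), rcomp s (∅ : Set (X × X)) = ∅ := by
    intro s; ext p; simp [rcomp]
  have L5a : ∀ a b d : J, rcomp (Xs a ×ˢ Xs b) (Xs b ×ˢ Xs d) = Xs a ×ˢ Xs d := by
    intro a b d
    ext ⟨x, y⟩
    constructor
    · rintro ⟨z, hz1, hz2⟩
      exact ⟨hz1.1, hz2.2⟩
    · rintro ⟨hx, hy⟩
      obtain ⟨z, hz⟩ := hne b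
      exact ⟨z, ⟨hx, hz⟩, hz, hy⟩
  have L5b : ∀ a b c d : J, b ≠ c →
      rcomp (Xs a ×ˢ Xs b) (Xs c ×ˢ Xs d) = ∅ := by
    intro a b c d hbc
    ext ⟨x, y⟩
    simp only [Set.mem_empty_iff_false, iff_false]
    rintro ⟨z, hz1, hz2⟩
    exact hbc (hblock hz1.2 hz2.1)
  set T : Set (Set (X × X)) :=
    insert ∅ (insert RP {A : Set (X × X) | ∃ j1 j2 : J, A = Xs j1 ×ˢ Xs j2}) with hT
  have hmulT : ∀ A ∈ T, ∀ B ∈ T, A * B ∈ T := by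
    intro A hA B hB
    rw [hmul]
    rcases hA with rfl | rfl | ⟨a, b, rfl⟩
    · rw [L4a]; exact Or.inl rfl
    · rcases hB with rfl | rfl | ⟨c, d, rfl⟩
      · rw [L4b]; exact Or.inl rfl
      · rw [L3]; exact Or.inr (Or.inl rfl)
      · rw [L1]; exact Or.inr (Or.inr ⟨c, d, rfl⟩)
    · rcases hB with rfl | rfl | ⟨c, d, rfl⟩
      · rw [L4b]; exact Or.inl rfl
      · rw [L2]; exact Or.inr (Or.inr ⟨a, b, rfl⟩)
      · by_cases hbc : b = c
        · subst hbc; rw [L5a]; exact Or.inr (Or.inr ⟨a, d, rfl⟩)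
        · rw [L5b a b c d hbc]; exact Or.inl rfl
  let S : Subsemigroup (Set (X × X)) :=
    { carrier := T, mul_mem' := fun ha hb => hmulT _ ha _ hb }
  have hGT : G ⊆ T := by
    rw [hG]
    rintro A (rfl | ⟨a, b, hab, rfl⟩)
    · exact Or.inr (Or.inl rfl)
    · exact Or.inr (Or.inr ⟨a, b, rfl⟩)
  have hsub1 : (Subsemigroup.closure G : Set (Set (X × X))) ⊆ T :=
    Subsemigroup.closure_le (S := S).2 hGT
  have hRPG : RP ∈ Subsemigroup.closure G :=
    Subsemigroup.subset_closure (hG ▸ Or.inl rfl)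
  have hblockG : ∀ a b : J, Xs a ×ˢ Xs b ∈ Subsemigroup.closure G := by
    intro a b
    by_cases hab : a = b
    · subst hab
      obtain ⟨j1, j2, h12⟩ := hJ
      obtain ⟨k, hk⟩ : ∃ k, k ≠ a := by
        rcases eq_or_ne a j1 with rfl | h
        · exact ⟨j2, h12.symm⟩
        · exact ⟨j1, h.symm⟩
      have h1 : Xs a ×ˢ Xs k ∈ Subsemigroup.closure G :=
        Subsemigroup.subset_closure (hG ▸ Or.inr ⟨a, k, fun h => hk h.symm, rfl⟩)
      have h2 : Xs k ×ˢ Xs a ∈ Subsemigroup.closure G :=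
        Subsemigroup.subset_closure (hG ▸ Or.inr ⟨k, a, hk, rfl⟩)
      have := Subsemigroup.mul_mem _ h1 h2
      rwa [hmul, L5a] at this
    · exact Subsemigroup.subset_closure (hG ▸ Or.inr ⟨a, b, hab, rfl⟩)
  have hemptyG : (∅ : Set (X × X)) ∈ Subsemigroup.closure G := by
    obtain ⟨j1, j2, h12⟩ := hJ
    have h1 : Xs j1 ×ˢ Xs j2 ∈ Subsemigroup.closure G :=
      Subsemigroup.subset_closure (hG ▸ Or.inr ⟨j1, j2, h12, rfl⟩)
    have := Subsemigroup.mul_mem _ h1 h1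
    rwa [hmul, L5b j1 j2 j1 j2 (fun h => h12 h.symm)] at this
  have hsub2 : T ⊆ (Subsemigroup.closure G : Set (Set (X × X))) := by
    rintro A (rfl | rfl | ⟨a, b, rfl⟩)
    · exact hemptyG
    · exact hRPG
    · exact hblockG a b
  have heq : (Subsemigroup.closure G : Set (Set (X × X))) = T :=
    Set.Subset.antisymm hsub1 hsub2
  refine ⟨heq, ?_⟩
  intro s hs
  have hsT : s ∈ T := heq ▸ hs
  rcases hsT with rfl | rfl | ⟨a, b, rfl⟩
  · exact ⟨L4b RP, L4a RP⟩
  · exact ⟨L3, L3⟩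
  · exact ⟨L1 a b, L2 a b⟩
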